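/- arXiv:2310.03853 — 2 statements merged into one kernel-verified Lean document; each statement's English description precedes it below -/
import Mathlib

section
/- Let mu, nu be probability measures on a measurable space X, set mu_t := (1-t)*mu + t*nu, and for each t in [0,1] let P_t be a Markov kernel on X with invariant distribution mu_t, i.e. ∫ P_t(x,A) mu_t(dx) = mu_t(A) for every measurable set A. Let f be bounded and measurable. Suppose the map t |-> ∫ P_t(x,f) mu(dx) has right derivative a at t = 0 and the map t |-> ∫ P_t(x,f) nu(dx) - ∫ P_t(x,f) mu(dx) is right-continuous at t = 0. Then a = ∫ ( f(y) - P_0(y,f) ) d(nu - mu)(y). In other words, the derivative in the invariant distribution of the kernel family at mu, with starting distribution mu, has density f - P_mu f with respect to the perturbation. -/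
open MeasureTheory ProbabilityTheory

section aux

variable {X : Type*} [MeasurableSpace X]

lemma aux_meas_int (κ : Kernel X X) [IsSFiniteKernel κ] {f : X → ℝ} (hfm : Measurable f) :
    Measurable fun x => ∫ y, f y ∂κ x := by
  have h : StronglyMeasurable (Function.uncurry fun (_ : X) (y : X) => f y) :=
    (hfm.comp measurable_snd).stronglyMeasurable
  exact (h.integral_kernel_prod_right (κ := κ)).measurable

lemma aux_intg {m : Measure X} [IsFiniteMeasure m] {F : X → ℝ} (hF : Measurable F) {C : ℝ}
    (hb : ∀ x, |F x| ≤ C) : Integrable F m :=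
  (integrable_const C).mono' hF.aestronglyMeasurable
    (Filter.Eventually.of_forall fun x => by simpa using hb x)

lemma aux_int_bound {m : Measure X} [IsProbabilityMeasure m] {F : X → ℝ} (hF : Measurable F)
    {C : ℝ} (hb : ∀ x, |F x| ≤ C) : |∫ x, F x ∂m| ≤ C := by
  calc |∫ x, F x ∂m| ≤ ∫ x, |F x| ∂m := by
        simpa using norm_integral_le_integral_norm F
    _ ≤ ∫ _x, C ∂m := integral_mono (aux_intg hF hb).abs (integrable_const C)
        (fun x => hb x)
    _ = C := by simp

lemma aux_inv_int (m : Measure X) [IsProbabilityMeasure m] (κ : Kernel X X) [IsMarkovKernel κ]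
    (hbind : m.bind κ = m) {f : X → ℝ} (hfm : Measurable f) {C : ℝ} (hC : 0 ≤ C)
    (hfb : ∀ x, |f x| ≤ C) : ∫ x, ∫ y, f y ∂κ x ∂m = ∫ y, f y ∂m := by
  set g : X → ℝ := fun y => f y + C with hg
  have hg0 : ∀ y, 0 ≤ g y := fun y => by have := abs_le.1 (hfb y); simp [hg]; linarith
  have hgb : ∀ y, |g y| ≤ 2 * C := fun y => by
    have := abs_le.1 (hfb y); rw [abs_le]; constructor <;> simp [hg] <;> linarith
  have hgm : Measurable g := hfm.add_const C
  -- lintegral version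
  set L : Measure X → ENNReal := fun p => ∫⁻ y, ENNReal.ofReal (g y) ∂p with hL
  have hLle : ∀ (p : Measure X), IsProbabilityMeasure p → L p ≤ ENNReal.ofReal (2 * C) := by
    intro p hp
    calc L p ≤ ∫⁻ _y, ENNReal.ofReal (2 * C) ∂p :=
          lintegral_mono fun y => ENNReal.ofReal_le_ofReal ((le_abs_self _).trans (hgb y))
      _ = ENNReal.ofReal (2 * C) := by simp
  have hLne : ∀ (p : Measure X), IsProbabilityMeasure p → L p ≠ ⊤ := fun p hp =>
    ((hLle p hp).trans_lt ENNReal.ofReal_lt_top).ne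
  have key : ∫⁻ x, L (κ x) ∂m = L m := by
    conv_rhs => rw [← hbind]
    exact (Measure.lintegral_bind κ.measurable.aemeasurable (hgm.ennreal_ofReal.aemeasurable)).symm
  -- pointwise identity for inner integrals
  have hinner : ∀ (p : Measure X), IsProbabilityMeasure p →
      ∫ y, g y ∂p = (L p).toReal := by
    intro p hp
    exact integral_eq_lintegral_of_nonneg_ae (Filter.Eventually.of_forall hg0)
      hgm.aestronglyMeasurable
  -- outer integral of g
  have houter : ∫ x, ∫ y, g y ∂κ x ∂m = (L m).toReal := by
    have h1 : ∫ x, ∫ y, g y ∂κ x ∂m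
        = (∫⁻ x, ENNReal.ofReal (∫ y, g y ∂κ x) ∂m).toReal :=
      integral_eq_lintegral_of_nonneg_ae
        (Filter.Eventually.of_forall fun x => integral_nonneg hg0)
        (aux_meas_int κ hgm).aestronglyMeasurable
    have h2 : ∀ x, ENNReal.ofReal (∫ y, g y ∂κ x) = L (κ x) := by
      intro x
      rw [hinner (κ x) inferInstance, ENNReal.ofReal_toReal (hLne _ inferInstance)]
    rw [h1]
    simp_rw [h2, key]
  have hgint : ∀ (p : Measure X), IsProbabilityMeasure p → ∫ y, g y ∂p = ∫ y, f y ∂p + C := by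
    intro p hp
    rw [hg]
    rw [integral_add (aux_intg hfm hfb) (integrable_const C), integral_const]
    simp
  -- put it together
  have hsplit : ∀ x, ∫ y, f y ∂κ x = ∫ y, g y ∂κ x - C := fun x => by
    rw [hgint (κ x) inferInstance]; ring
  calc ∫ x, ∫ y, f y ∂κ x ∂m = ∫ x, (∫ y, g y ∂κ x - C) ∂m := by
        exact integral_congr_ae (Filter.Eventually.of_forall hsplit)
    _ = ∫ x, ∫ y, g y ∂κ x ∂m - C := by
        rw [integral_sub (aux_intg (aux_meas_int κ hgm)
          (fun x => aux_int_bound hgm hgb)) (integrable_const C), integral_const]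
        simp
    _ = ∫ y, g y ∂m - C := by rw [houter, ← hinner m inferInstance]
    _ = ∫ y, f y ∂m := by rw [hgint m inferInstance]; ring

end aux

/-- **The density of the derivative in the invariant distribution at `ρ = μ` is
`f - P_μ f`.**  Let `μ, ν` be probability measures, `μ_t := (1-t)μ + tν`, and for each
`t ∈ [0,1]` let `P t` be a Markov kernel with invariant distribution `μ_t`.  If
`t ↦ ∫ P_t(x,f) μ(dx)` has right derivative `a` at `t = 0` and
`t ↦ ∫ P_t(x,f) ν(dx) - ∫ P_t(x,f) μ(dx)` is right-continuous at `t = 0`, then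
`a = ∫ (f(y) - P_0(y,f)) d(ν - μ)(y)`. -/
theorem stmt_3 {X : Type*} [MeasurableSpace X]
    (μ ν : Measure X) [IsProbabilityMeasure μ] [IsProbabilityMeasure ν]
    (P : ℝ → Kernel X X) (hPm : ∀ t ∈ Set.Icc (0 : ℝ) 1, IsMarkovKernel (P t))
    (hinv : ∀ t ∈ Set.Icc (0 : ℝ) 1, ∀ A : Set X, MeasurableSet A →
      ∫⁻ x, (P t) x A ∂(ENNReal.ofReal (1 - t) • μ + ENNReal.ofReal t • ν)
        = (ENNReal.ofReal (1 - t) • μ + ENNReal.ofReal t • ν) A)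
    (f : X → ℝ) (hfm : Measurable f) (hfb : ∃ C, ∀ x, |f x| ≤ C)
    (a : ℝ)
    (hderiv : HasDerivWithinAt (fun t => ∫ x, ∫ y, f y ∂((P t) x) ∂μ) a (Set.Ici 0) 0)
    (hcont : ContinuousWithinAt
      (fun t => (∫ x, ∫ y, f y ∂((P t) x) ∂ν) - ∫ x, ∫ y, f y ∂((P t) x) ∂μ)
      (Set.Ici 0) 0) :
    a = (∫ y, (f y - ∫ z, f z ∂((P 0) y)) ∂ν) - ∫ y, (f y - ∫ z, f z ∂((P 0) y)) ∂μ := by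
  obtain ⟨C₀, hC₀⟩ := hfb
  set C : ℝ := |C₀| with hCdef
  have hC : 0 ≤ C := abs_nonneg _
  have hfb' : ∀ x, |f x| ≤ C := fun x => (hC₀ x).trans (le_abs_self _)
  set G : ℝ → ℝ := fun t => ∫ x, ∫ y, f y ∂(P t) x ∂μ with hG
  set H : ℝ → ℝ := fun t => ∫ x, ∫ y, f y ∂(P t) x ∂ν with hH
  set cμ : ℝ := ∫ y, f y ∂μ with hcμ
  set cν : ℝ := ∫ y, f y ∂ν with hcν
  -- the key algebraic identity from invariance
  have key : ∀ t ∈ Set.Icc (0:ℝ) 1,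
      (1 - t) * G t + t * H t = (1 - t) * cμ + t * cν := by
    intro t ht
    haveI := hPm t ht
    set m : Measure X := ENNReal.ofReal (1 - t) • μ + ENNReal.ofReal t • ν with hm
    haveI : IsProbabilityMeasure m := by
      constructor
      rw [hm]
      simp only [Measure.add_apply, Measure.smul_apply, smul_eq_mul, measure_univ, mul_one]
      rw [← ENNReal.ofReal_add (by linarith [ht.2]) ht.1, sub_add_cancel, ENNReal.ofReal_one]
    have hbind : m.bind (P t) = m := by
      ext A hA
      rw [Measure.bind_apply hA (P t).measurable.aemeasurable]
      exact hinv t ht A hA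
    have hmain := aux_inv_int m (P t) hbind hfm hC hfb'
    -- split both sides of hmain over the two measures
    have hsplit : ∀ F : X → ℝ, Measurable F → (∀ x, |F x| ≤ C) →
        ∫ x, F x ∂m = (1 - t) * ∫ x, F x ∂μ + t * ∫ x, F x ∂ν := by
      intro F hFm hFb
      rw [hm, integral_add_measure
        ((aux_intg hFm hFb).smul_measure ENNReal.ofReal_ne_top)
        ((aux_intg hFm hFb).smul_measure ENNReal.ofReal_ne_top),
        integral_smul_measure, integral_smul_measure,
        ENNReal.toReal_ofReal (by linarith [ht.2]), ENNReal.toReal_ofReal ht.1]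
      simp [smul_eq_mul]
    rw [hsplit _ (aux_meas_int (P t) hfm) (fun x => aux_int_bound hfm hfb'),
      hsplit f hfm hfb'] at hmain
    exact hmain
  have hG0 : G 0 = cμ := by
    have h0 := key 0 ⟨le_refl 0, zero_le_one⟩
    simpa using h0
  -- limits
  have hslope : Filter.Tendsto (slope G 0) (nhdsWithin 0 (Set.Ioi 0)) (nhds a) := by
    have := hasDerivWithinAt_iff_tendsto_slope.mp hderiv
    rwa [Set.Ici_sdiff_left] at this
  have hGc : Filter.Tendsto G (nhdsWithin 0 (Set.Ici 0)) (nhds (G 0)) :=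
    hderiv.continuousWithinAt
  have hHc : Filter.Tendsto H (nhdsWithin 0 (Set.Ici 0)) (nhds (H 0)) := by
    have h1 : Filter.Tendsto (fun t => H t - G t) (nhdsWithin 0 (Set.Ici 0))
        (nhds (H 0 - G 0)) := hcont
    have := h1.add hGc
    simpa using this
  set φ : ℝ → ℝ := fun t => (cν - H t) / (1 - t) with hφdef
  have hφ : Filter.Tendsto φ (nhdsWithin 0 (Set.Ioi 0)) (nhds (cν - H 0)) := by
    have hden : Filter.Tendsto (fun t : ℝ => 1 - t) (nhdsWithin 0 (Set.Ici 0))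
        (nhds 1) := by
      have : Filter.Tendsto (fun t : ℝ => 1 - t) (nhds 0) (nhds (1 - 0)) :=
        (continuous_const.sub continuous_id).tendsto 0
      simpa using this.mono_left nhdsWithin_le_nhds
    have hnum : Filter.Tendsto (fun t => cν - H t) (nhdsWithin 0 (Set.Ici 0))
        (nhds (cν - H 0)) := Filter.Tendsto.const_sub _ hHc
    have := hnum.div hden one_ne_zero
    simp only [div_one] at this
    exact this.mono_left (nhdsWithin_mono _ Set.Ioi_subset_Ici_self)
  have heq : slope G 0 =ᶠ[nhdsWithin 0 (Set.Ioi 0)] φ := by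
    filter_upwards [Ioo_mem_nhdsGT_of_mem ⟨le_refl (0:ℝ), zero_lt_one⟩] with t ht
    have ht0 : (0:ℝ) < t := ht.1
    have ht1 : t < 1 := ht.2
    have hk := key t ⟨ht0.le, ht1.le⟩
    rw [slope_def_field, hG0, hφdef]
    rw [sub_zero, div_eq_div_iff ht0.ne' (by linarith : (1:ℝ) - t ≠ 0)]
    nlinarith [hk]
  have ha : a = cν - H 0 :=
    tendsto_nhds_unique hslope (hφ.congr' heq.symm)
  -- compute the RHS
  haveI : IsMarkovKernel (P 0) := hPm 0 ⟨le_refl 0, zero_le_one⟩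
  have hPfint_m : Measurable fun y => ∫ z, f z ∂(P 0) y := aux_meas_int (P 0) hfm
  have hPfb : ∀ y, |∫ z, f z ∂(P 0) y| ≤ C := fun y => aux_int_bound hfm hfb'
  have hsub : ∀ (p : Measure X), IsProbabilityMeasure p →
      ∫ y, (f y - ∫ z, f z ∂(P 0) y) ∂p = (∫ y, f y ∂p) - ∫ y, ∫ z, f z ∂(P 0) y ∂p := by
    intro p hp
    exact integral_sub (aux_intg hfm hfb') (aux_intg hPfint_m hPfb)
  rw [hsub ν inferInstance, hsub μ inferInstance, ha]
  have : (∫ x, ∫ y, f y ∂(P 0) x ∂μ) = cμ := hG0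
  rw [← hcν, ← hcμ]
  change cν - H 0 = (cν - H 0) - (cμ - G 0)
  rw [hG0]
  ring
end

section
/- Let X be a measurable space equipped with a sigma-finite measure lambda, V : X -> [1,infinity) measurable, and let g be a balancing function that is twice differentiable and non-decreasing with g' and g'' bounded. Let q be a bounded positive proposal density, and let mu, nu be probability measures with everywhere positive bounded densities with respect to lambda satisfying ∫ V dmu < infinity and ∫ V dnu < infinity. Let rho be a probability measure with density such that sup_x rho(x)/mu(x)^2 < infinity and sup_x rho(x)/nu(x)^2 < infinity, and let f be measurable with ||f||_V < infinity. Then the map t |-> P_{mu_t}(rho,f), where P_{mu_t} is the Hastings kernel with invariant distribution mu_t, has right derivative at t = 0 equal to ∫ (nu(y) - mu(y)) D(y) lambda(dy), where D(y) := ∫ (f(y) - f(z)) (rho(z)/mu(z)) g'(r_mu(z,y)) q(y,z) lambda(dz) - (rho(y)/mu(y)^2) ∫ (f(z) - f(y)) q(z,y) g'(r_mu(y,z)) mu(z) lambda(dz). -/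
open MeasureTheory ProbabilityTheory

/-- The Hastings ratio `r_μ(x,y) = μ(y)q(y,x) / (μ(x)q(x,y))` for a target density `p`. -/
noncomputable def hastingsRatio {X : Type*} (q : X → X → ℝ) (p : X → ℝ) (x y : X) : ℝ :=
  p y * q y x / (p x * q x y)

/-- The Hastings kernel with balancing function `g`, proposal density `q` and invariant
density `p`, applied to starting point `x` and test function `f`:
`P_μ(x,f) = ∫ f(y) g(r_μ(x,y)) q(x,y) λ(dy) + f(x) (1 - ∫ g(r_μ(x,y)) q(x,y) λ(dy))`. -/
noncomputable def hastingsKernelFun {X : Type*} [MeasurableSpace X] (lam : Measure X)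
    (g : ℝ → ℝ) (q : X → X → ℝ) (p : X → ℝ) (x : X) (f : X → ℝ) : ℝ :=
  (∫ y, f y * g (hastingsRatio q p x y) * q x y ∂lam)
    + f x * (1 - ∫ y, g (hastingsRatio q p x y) * q x y ∂lam)

open Set Filter Topology
open scoped NNReal ENNReal

lemma measurable_comp_pos {Z : Type*} [MeasurableSpace Z] {φ : ℝ → ℝ}
    (hφ : ContinuousOn φ (Set.Ioi 0)) {r : Z → ℝ} (hr : Measurable r)
    (hrpos : ∀ z, 0 < r z) : Measurable fun z => φ (r z) := by
  have h1 : Continuous fun u : Set.Ioi (0:ℝ) => φ u :=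
    continuousOn_iff_continuous_restrict.mp hφ
  have h2 : (fun z => φ (r z))
      = (fun u : Set.Ioi (0:ℝ) => φ u) ∘ fun z => (⟨r z, hrpos z⟩ : Set.Ioi (0:ℝ)) := rfl
  rw [h2]
  exact h1.measurable.comp (hr.subtype_mk)

lemma lip_of_deriv {g g' : ℝ → ℝ} (hg' : ∀ u : ℝ, 0 < u → HasDerivAt g (g' u) u)
    {c : ℝ} (hc : ∀ u : ℝ, 0 < u → |g' u| ≤ c) {a b : ℝ} (ha : 0 < a) (hb : 0 < b) :
    |g b - g a| ≤ c * |b - a| := by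
  have := Convex.norm_image_sub_le_of_norm_hasDerivWithin_le
    (f := g) (f' := g') (s := Set.Ioi (0:ℝ))
    (fun u hu => (hg' u hu).hasDerivWithinAt) (fun u hu => hc u hu) (convex_Ioi 0) ha hb
  simpa [Real.norm_eq_abs] using this

lemma integrable_of_integral_one {X : Type*} [MeasurableSpace X] {lam : Measure X}
    {h : X → ℝ} (hint : ∫ y, h y ∂lam = 1) : Integrable h lam := by
  by_contra hcon
  rw [integral_undef hcon] at hint
  norm_num at hint

set_option maxHeartbeats 1000000 in
/-- **Derivative in the invariant distribution of Hastings kernels (density case).**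
With `g` a twice-differentiable non-decreasing balancing function with bounded first and
second derivatives, `q` a bounded positive proposal density, `μ = pμ·λ`, `ν = pν·λ`
probability measures with positive bounded densities and finite `V`-moments, `ρ = pρ·λ` a
warm-start initial distribution (`pρ/pμ², pρ/pν²` bounded), and `f` with `‖f‖_V < ∞`,
the map `t ↦ P_{μ_t}(ρ, f)` (`μ_t` the measure with density `(1-t)pμ + t pν`) has right
derivative at `t = 0` equal to `∫ (pν(y) - pμ(y)) D(y) λ(dy)` with
`D(y) = ∫ (f(y)-f(z)) (pρ(z)/pμ(z)) g'(r_μ(z,y)) q(y,z) λ(dz)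
        - (pρ(y)/pμ(y)²) ∫ (f(z)-f(y)) q(z,y) g'(r_μ(y,z)) pμ(z) λ(dz)`. -/
theorem stmt_5 {X : Type*} [MeasurableSpace X]
    (lam : Measure X) [SigmaFinite lam]
    (V : X → ℝ) (hVm : Measurable V) (hV1 : ∀ x, 1 ≤ V x)
    (g g' g'' : ℝ → ℝ)
    (hgpos : ∀ u : ℝ, 0 < u → 0 < g u ∧ g u ≤ 1)
    (hgbal : ∀ u : ℝ, 0 < u → g u = u * g (1 / u))
    (hgmono : MonotoneOn g (Set.Ioi 0))
    (hg' : ∀ u : ℝ, 0 < u → HasDerivAt g (g' u) u)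
    (hg'' : ∀ u : ℝ, 0 < u → HasDerivAt g' (g'' u) u)
    (hg'b : ∃ c, ∀ u : ℝ, 0 < u → |g' u| ≤ c)
    (hg''b : ∃ c, ∀ u : ℝ, 0 < u → |g'' u| ≤ c)
    (q : X → X → ℝ) (hqm : Measurable (Function.uncurry q))
    (hqpos : ∀ x y, 0 < q x y) (hqb : ∃ c, ∀ x y, q x y ≤ c)
    (hqint : ∀ x, ∫ y, q x y ∂lam = 1)
    (pμ pν : X → ℝ) (hpμm : Measurable pμ) (hpνm : Measurable pν)
    (hpμpos : ∀ x, 0 < pμ x) (hpνpos : ∀ x, 0 < pν x)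
    (hpμb : ∃ c, ∀ x, pμ x ≤ c) (hpνb : ∃ c, ∀ x, pν x ≤ c)
    (hμprob : IsProbabilityMeasure (lam.withDensity fun x => ENNReal.ofReal (pμ x)))
    (hνprob : IsProbabilityMeasure (lam.withDensity fun x => ENNReal.ofReal (pν x)))
    (hVμ : Integrable (fun x => V x * pμ x) lam)
    (hVν : Integrable (fun x => V x * pν x) lam)
    (pρ : X → ℝ) (hpρm : Measurable pρ) (hpρ0 : ∀ x, 0 ≤ pρ x)
    (hρprob : IsProbabilityMeasure (lam.withDensity fun x => ENNReal.ofReal (pρ x)))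
    (hρμ : ∃ c, ∀ x, pρ x ≤ c * pμ x ^ 2)
    (hρν : ∃ c, ∀ x, pρ x ≤ c * pν x ^ 2)
    (f : X → ℝ) (hfm : Measurable f) (hfV : ∃ c, ∀ x, |f x| ≤ c * V x) :
    HasDerivWithinAt
      (fun t =>
        ∫ x, hastingsKernelFun lam g q (fun y => (1 - t) * pμ y + t * pν y) x f
          ∂(lam.withDensity fun x => ENNReal.ofReal (pρ x)))
      (∫ y, (pν y - pμ y) *
          ((∫ z, (f y - f z) * (pρ z / pμ z) * g' (hastingsRatio q pμ z y) * q y z ∂lam)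
            - pρ y / pμ y ^ 2 *
                ∫ z, (f z - f y) * q z y * g' (hastingsRatio q pμ y z) * pμ z ∂lam) ∂lam)
      (Set.Ici 0) 0 := by
  obtain ⟨c', hc'⟩ := hg'b
  obtain ⟨cq, hcq⟩ := hqb
  obtain ⟨cρ, hcρ⟩ := hρμ
  obtain ⟨cf, hcf⟩ := hfV
  obtain ⟨cμ, hcμ⟩ := hpμb
  have hX : Nonempty X := by
    by_contra h
    rw [not_nonempty_iff] at h
    have h1 := hμprob.measure_univ
    rw [Set.univ_eq_empty_iff.mpr h, measure_empty] at h1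
    exact zero_ne_one h1
  obtain ⟨x₀⟩ := hX
  have hc'0 : 0 ≤ c' := le_trans (abs_nonneg _) (hc' 1 one_pos)
  have hcq0 : 0 < cq := lt_of_lt_of_le (hqpos x₀ x₀) (hcq x₀ x₀)
  have hcρ0 : 0 ≤ cρ := by nlinarith [hpρ0 x₀, hcρ x₀, pow_pos (hpμpos x₀) 2]
  have hcf0 : 0 ≤ cf := by nlinarith [abs_nonneg (f x₀), hcf x₀, hV1 x₀]
  have hcμ0 : 0 < cμ := lt_of_lt_of_le (hpμpos x₀) (hcμ x₀)
  -- facts about g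
  have hg0 : ∀ u : ℝ, 0 < u → 0 < g u := fun u hu => (hgpos u hu).1
  have hgle1 : ∀ u : ℝ, 0 < u → g u ≤ 1 := fun u hu => (hgpos u hu).2
  have hgleu : ∀ u : ℝ, 0 < u → g u ≤ u := by
    intro u hu
    rw [hgbal u hu]
    have h1 := hgle1 (1/u) (by positivity)
    nlinarith
  have hgc : ContinuousOn g (Set.Ioi 0) := fun u hu =>
    ((hg' u hu).continuousAt).continuousWithinAt
  have hg'c : ContinuousOn g' (Set.Ioi 0) := fun u hu =>
    ((hg'' u hu).continuousAt).continuousWithinAt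
  -- the path of densities and ratios
  set p : ℝ → X → ℝ := fun t x => (1 - t) * pμ x + t * pν x with hp
  set r : ℝ → X → X → ℝ := fun t x y => p t y * q y x / (p t x * q x y) with hrdef
  have hp0 : ∀ x, p 0 x = pμ x := by intro x; simp [hp]
  have h02 : (0:ℝ) ∈ Set.Icc (0:ℝ) 2⁻¹ := by norm_num
  have hpt_pos : ∀ t ∈ Set.Icc (0:ℝ) 2⁻¹, ∀ x, 0 < p t x := by
    intro t ht x
    have h1 := hpμpos x; have h2 := hpνpos x
    have h3 := ht.1; have h4 := ht.2
    simp only [hp]; nlinarith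
  have hpt_half : ∀ t ∈ Set.Icc (0:ℝ) 2⁻¹, ∀ x, pμ x / 2 ≤ p t x := by
    intro t ht x
    have h1 := hpμpos x; have h2 := hpνpos x
    have h3 := ht.1; have h4 := ht.2
    simp only [hp]; nlinarith
  have hpt_le : ∀ t ∈ Set.Icc (0:ℝ) 2⁻¹, ∀ x, p t x ≤ pμ x + pν x := by
    intro t ht x
    have h1 := hpμpos x; have h2 := hpνpos x
    have h3 := ht.1; have h4 := ht.2
    simp only [hp]; nlinarith
  have hr_pos : ∀ t ∈ Set.Icc (0:ℝ) 2⁻¹, ∀ x y, 0 < r t x y := by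
    intro t ht x y
    have h1 := hpt_pos t ht x; have h2 := hpt_pos t ht y
    have h3 := hqpos x y; have h4 := hqpos y x
    simp only [hrdef]; positivity
  have hr0_eq : ∀ x y, r 0 x y = hastingsRatio q pμ x y := by
    intro x y; simp only [hrdef, hastingsRatio, hp0]
  -- measurability
  have hptm : ∀ t, Measurable (p t) := fun t =>
    (measurable_const.mul hpμm).add (measurable_const.mul hpνm)
  have mq1 : Measurable fun z : X × X => q z.1 z.2 := hqm
  have mq2 : Measurable fun z : X × X => q z.2 z.1 := hqm.comp measurable_swap
  have mr : ∀ t, Measurable fun z : X × X => r t z.1 z.2 := by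
    intro t
    simp only [hrdef]
    exact (((hptm t).comp measurable_snd).mul mq2).div
      (((hptm t).comp measurable_fst).mul mq1)
  have mgr : ∀ t ∈ Set.Icc (0:ℝ) 2⁻¹, Measurable fun z : X × X => g (r t z.1 z.2) :=
    fun t ht => measurable_comp_pos hgc (mr t) fun z => hr_pos t ht z.1 z.2
  have mg'r : Measurable fun z : X × X => g' (r 0 z.1 z.2) :=
    measurable_comp_pos hg'c (mr 0) fun z => hr_pos 0 h02 z.1 z.2
  -- single-variable integrable functions
  have int_μ : Integrable pμ lam := by
    refine hVμ.mono' hpμm.aestronglyMeasurable (Filter.Eventually.of_forall fun x => ?_)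
    rw [Real.norm_eq_abs, abs_of_pos (hpμpos x)]
    nlinarith [hV1 x, hpμpos x]
  have int_ν : Integrable pν lam := by
    refine hVν.mono' hpνm.aestronglyMeasurable (Filter.Eventually.of_forall fun x => ?_)
    rw [Real.norm_eq_abs, abs_of_pos (hpνpos x)]
    nlinarith [hV1 x, hpνpos x]
  have int_fμ : Integrable (fun x => |f x| * pμ x) lam := by
    refine (hVμ.const_mul cf).mono' (hfm.abs.mul hpμm).aestronglyMeasurable
      (Filter.Eventually.of_forall fun x => ?_)
    rw [Real.norm_eq_abs, abs_of_nonneg (mul_nonneg (abs_nonneg _) (hpμpos x).le)]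
    nlinarith [hcf x, hpμpos x, abs_nonneg (f x)]
  have int_fν : Integrable (fun x => |f x| * pν x) lam := by
    refine (hVν.const_mul cf).mono' (hfm.abs.mul hpνm).aestronglyMeasurable
      (Filter.Eventually.of_forall fun x => ?_)
    rw [Real.norm_eq_abs, abs_of_nonneg (mul_nonneg (abs_nonneg _) (hpνpos x).le)]
    nlinarith [hcf x, hpνpos x, abs_nonneg (f x)]
  have int_fμν : Integrable (fun x => |f x| * (pμ x + pν x)) lam := by
    have he : (fun x => |f x| * (pμ x + pν x)) = fun x => |f x| * pμ x + |f x| * pν x := by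
      funext x; ring
    rw [he]; exact int_fμ.add int_fν
  have int_d : Integrable (fun x => |pν x - pμ x|) lam := by
    refine (int_μ.add int_ν).mono' (hpνm.sub hpμm).abs.aestronglyMeasurable
      (Filter.Eventually.of_forall fun x => ?_)
    rw [Real.norm_eq_abs, abs_abs]
    have h1 := abs_sub (pν x) (pμ x)
    rw [abs_of_pos (hpνpos x), abs_of_pos (hpμpos x)] at h1
    simp only [Pi.add_apply]
    linarith
  have int_fd : Integrable (fun x => |f x| * |pν x - pμ x|) lam := by
    refine int_fμν.mono' (hfm.abs.mul (hpνm.sub hpμm).abs).aestronglyMeasurable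
      (Filter.Eventually.of_forall fun x => ?_)
    rw [Real.norm_eq_abs, abs_of_nonneg (by positivity)]
    have h1 := abs_sub (pν x) (pμ x)
    rw [abs_of_pos (hpνpos x), abs_of_pos (hpμpos x)] at h1
    nlinarith [abs_nonneg (f x)]
  have hρμ2 : ∀ x, pρ x ≤ (cρ * cμ) * pμ x := by
    intro x
    nlinarith [hcρ x, mul_nonneg (mul_nonneg hcρ0 (hpμpos x).le) (sub_nonneg.mpr (hcμ x))]
  have int_ρ : Integrable pρ lam := by
    refine (int_μ.const_mul (cρ * cμ)).mono' hpρm.aestronglyMeasurable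
      (Filter.Eventually.of_forall fun x => ?_)
    rw [Real.norm_eq_abs, abs_of_nonneg (hpρ0 x)]
    exact hρμ2 x
  have int_fρ : Integrable (fun x => |f x| * pρ x) lam := by
    refine (hVμ.const_mul (cf * (cρ * cμ))).mono' (hfm.abs.mul hpρm).aestronglyMeasurable
      (Filter.Eventually.of_forall fun x => ?_)
    rw [Real.norm_eq_abs, abs_of_nonneg (mul_nonneg (abs_nonneg _) (hpρ0 x))]
    calc |f x| * pρ x ≤ (cf * V x) * ((cρ * cμ) * pμ x) := by
          refine mul_le_mul (hcf x) (hρμ2 x) (hpρ0 x) (mul_nonneg hcf0 (le_trans zero_le_one (hV1 x)))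
      _ = cf * (cρ * cμ) * (V x * pμ x) := by ring
  have hρdμ : ∀ x, pρ x / pμ x ≤ cρ * pμ x := by
    intro x
    rw [div_le_iff₀ (hpμpos x)]
    nlinarith [hcρ x]
  have int_ρdμ : Integrable (fun x => pρ x / pμ x) lam := by
    refine (int_μ.const_mul cρ).mono' (hpρm.div hpμm).aestronglyMeasurable
      (Filter.Eventually.of_forall fun x => ?_)
    rw [Real.norm_eq_abs, abs_of_nonneg (div_nonneg (hpρ0 x) (hpμpos x).le)]
    exact hρdμ x
  have int_fρdμ : Integrable (fun x => |f x| * (pρ x / pμ x)) lam := by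
    refine (hVμ.const_mul (cf * cρ)).mono' (hfm.abs.mul (hpρm.div hpμm)).aestronglyMeasurable
      (Filter.Eventually.of_forall fun x => ?_)
    have hd0 : 0 ≤ pρ x / pμ x := div_nonneg (hpρ0 x) (hpμpos x).le
    rw [Real.norm_eq_abs, abs_of_nonneg (mul_nonneg (abs_nonneg _) hd0)]
    calc |f x| * (pρ x / pμ x) ≤ (cf * V x) * (cρ * pμ x) :=
          mul_le_mul (hcf x) (hρdμ x) hd0 (mul_nonneg hcf0 (le_trans zero_le_one (hV1 x)))
      _ = cf * cρ * (V x * pμ x) := by ring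
  have intq : ∀ x, Integrable (q x) lam := fun x =>
    integrable_of_integral_one (hqint x)
  -- the product-space integrands
  set H : ℝ → X × X → ℝ := fun t z => (f z.2 - f z.1) * g (r t z.1 z.2) * q z.1 z.2 * pρ z.1
    with hH
  set H1 : X × X → ℝ := fun z =>
    (f z.2 - f z.1) * g' (r 0 z.1 z.2) * q z.2 z.1 * (pρ z.1 / pμ z.1) * (pν z.2 - pμ z.2)
    with hH1
  set H2 : X × X → ℝ := fun z =>
    (f z.2 - f z.1) * g' (r 0 z.1 z.2) * q z.2 z.1 * (pρ z.1 / pμ z.1 ^ 2)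
      * (pμ z.2 * (pν z.1 - pμ z.1)) with hH2
  set G : X × X → ℝ := fun z => 2 * c' * cq * cρ *
    ((|f z.1| + |f z.2|) * (|pν z.2 - pμ z.2| * pμ z.1 + pμ z.2 * |pν z.1 - pμ z.1|)) with hG
  have mH : ∀ t ∈ Set.Icc (0:ℝ) 2⁻¹, Measurable (H t) := by
    intro t ht
    simp only [hH]
    exact ((((hfm.comp measurable_snd).sub (hfm.comp measurable_fst)).mul (mgr t ht)).mul
      mq1).mul (hpρm.comp measurable_fst)
  have mH1 : Measurable H1 := by
    simp only [hH1]
    exact (((((hfm.comp measurable_snd).sub (hfm.comp measurable_fst)).mul mg'r).mul mq2).mul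
      ((hpρm.comp measurable_fst).div (hpμm.comp measurable_fst))).mul
      ((hpνm.comp measurable_snd).sub (hpμm.comp measurable_snd))
  have mH2 : Measurable H2 := by
    simp only [hH2]
    exact (((((hfm.comp measurable_snd).sub (hfm.comp measurable_fst)).mul mg'r).mul mq2).mul
      ((hpρm.comp measurable_fst).div ((hpμm.comp measurable_fst).pow_const 2))).mul
      ((hpμm.comp measurable_snd).mul
        ((hpνm.comp measurable_fst).sub (hpμm.comp measurable_fst)))
  have int_G : Integrable G (lam.prod lam) := by
    have he : G = fun z : X × X => (2 * c' * cq * cρ) *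
        ((|f z.1| * pμ z.1) * |pν z.2 - pμ z.2| + ((|f z.1| * |pν z.1 - pμ z.1|) * pμ z.2
          + (pμ z.1 * (|f z.2| * |pν z.2 - pμ z.2|)
            + |pν z.1 - pμ z.1| * (|f z.2| * pμ z.2)))) := by
      funext z; simp only [hG]; ring
    rw [he]
    exact ((int_fμ.mul_prod int_d).add ((int_fd.mul_prod int_μ).add
      ((int_μ.mul_prod int_fd).add (int_d.mul_prod int_fμ)))).const_mul _
  have int_fqρ : Integrable (fun z : X × X => |f z.1| * q z.1 z.2 * pρ z.1) (lam.prod lam) := by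
    have hm : AEStronglyMeasurable (fun z : X × X => |f z.1| * q z.1 z.2 * pρ z.1)
        (lam.prod lam) :=
      (((hfm.abs.comp measurable_fst).mul mq1).mul
        (hpρm.comp measurable_fst)).aestronglyMeasurable
    rw [MeasureTheory.integrable_prod_iff hm]
    constructor
    · exact Filter.Eventually.of_forall fun x => ((intq x).const_mul (|f x|)).mul_const (pρ x)
    · have heq : (fun x => ∫ y, ‖|f x| * q x y * pρ x‖ ∂lam) = fun x => |f x| * pρ x := by
        funext x
        have h1 : ∀ y, ‖|f x| * q x y * pρ x‖ = (|f x| * pρ x) * q x y := by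
          intro y
          rw [Real.norm_eq_abs, abs_of_nonneg
            (mul_nonneg (mul_nonneg (abs_nonneg _) (hqpos x y).le) (hpρ0 x))]
          ring
        simp_rw [h1]
        rw [integral_const_mul, hqint x, mul_one]
      rw [heq]
      exact int_fρ
  have int_M : Integrable (fun z : X × X => |f z.1| * q z.1 z.2 * pρ z.1 +
      (2 * cq) * ((pρ z.1 / pμ z.1) * (|f z.2| * (pμ z.2 + pν z.2)))) (lam.prod lam) :=
    int_fqρ.add ((int_ρdμ.mul_prod int_fμν).const_mul _)
  have habsf : ∀ x y : X, |f y - f x| ≤ |f x| + |f y| := by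
    intro x y
    have h := abs_sub (f y) (f x)
    linarith
  have hgqb : ∀ t ∈ Set.Icc (0:ℝ) 2⁻¹, ∀ x y : X,
      g (r t x y) * q x y ≤ 2 * cq * (pμ y + pν y) / pμ x := by
    intro t ht x y
    have hq1 := hqpos x y
    have hq2 := hqpos y x
    have hptx := hpt_pos t ht x
    have hrp := hr_pos t ht x y
    have hgu := hgleu _ hrp
    have h1 : g (r t x y) * q x y ≤ r t x y * q x y :=
      mul_le_mul_of_nonneg_right hgu hq1.le
    have h2 : r t x y * q x y = p t y * q y x / p t x := by
      simp only [hrdef]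
      field_simp
    have h3 : p t y * q y x / p t x ≤ (pμ y + pν y) * cq / (pμ x / 2) := by
      apply div_le_div₀ (mul_nonneg (add_nonneg (hpμpos y).le (hpνpos y).le) hcq0.le) ?_
        (by linarith [hpμpos x]) (hpt_half t ht x)
      exact mul_le_mul (hpt_le t ht y) (hcq y x) hq2.le
        (add_nonneg (hpμpos y).le (hpνpos y).le)
    have h4 : (pμ y + pν y) * cq / (pμ x / 2) = 2 * cq * (pμ y + pν y) / pμ x := by ring
    rw [h2] at h1
    linarith
  have hHbound : ∀ t ∈ Set.Icc (0:ℝ) 2⁻¹, ∀ z : X × X,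
      |H t z| ≤ |f z.1| * q z.1 z.2 * pρ z.1 +
        (2 * cq) * ((pρ z.1 / pμ z.1) * (|f z.2| * (pμ z.2 + pν z.2))) := by
    intro t ht z
    obtain ⟨x, y⟩ := z
    have hq1 := hqpos x y
    have hq2 := hqpos y x
    have hptx := hpt_pos t ht x
    have hpty := hpt_pos t ht y
    have hrp := hr_pos t ht x y
    have hgp := hg0 _ hrp
    have hg1 := hgle1 _ hrp
    have hgu := hgleu _ hrp
    have e0 : |H t (x, y)| = |f y - f x| * (g (r t x y) * (q x y * pρ x)) := by
      simp only [hH]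
      rw [abs_mul, abs_mul, abs_mul, abs_of_pos hgp, abs_of_pos hq1, abs_of_nonneg (hpρ0 x)]
      ring
    have hgq : g (r t x y) * q x y ≤ 2 * cq * (pμ y + pν y) / pμ x := hgqb t ht x y
    have t1 : |f x| * (g (r t x y) * q x y) * pρ x ≤ |f x| * q x y * pρ x := by
      apply mul_le_mul_of_nonneg_right _ (hpρ0 x)
      exact mul_le_mul_of_nonneg_left (mul_le_of_le_one_left hq1.le hg1) (abs_nonneg _)
    have t2 : |f y| * ((g (r t x y) * q x y) * pρ x)
        ≤ |f y| * ((2 * cq * (pμ y + pν y) / pμ x) * pρ x) := by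
      apply mul_le_mul_of_nonneg_left _ (abs_nonneg _)
      exact mul_le_mul_of_nonneg_right hgq (hpρ0 x)
    calc |H t (x, y)| = |f y - f x| * (g (r t x y) * (q x y * pρ x)) := e0
      _ ≤ (|f x| + |f y|) * (g (r t x y) * (q x y * pρ x)) := by
          apply mul_le_mul_of_nonneg_right (habsf x y)
          have := hpρ0 x
          positivity
      _ = |f x| * (g (r t x y) * q x y) * pρ x + |f y| * ((g (r t x y) * q x y) * pρ x) := by
          ring
      _ ≤ |f x| * q x y * pρ x + |f y| * ((2 * cq * (pμ y + pν y) / pμ x) * pρ x) :=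
          add_le_add t1 t2
      _ = |f x| * q x y * pρ x + (2 * cq) * ((pρ x / pμ x) * (|f y| * (pμ y + pν y))) := by
          field_simp
  have int_H : ∀ t ∈ Set.Icc (0:ℝ) 2⁻¹, Integrable (H t) (lam.prod lam) := by
    intro t ht
    refine int_M.mono' (mH t ht).aestronglyMeasurable (Filter.Eventually.of_forall fun z => ?_)
    rw [Real.norm_eq_abs]
    exact hHbound t ht z
  have int_H1 : Integrable H1 (lam.prod lam) := by
    refine (((int_fρdμ.mul_prod int_d).add (int_ρdμ.mul_prod int_fd)).const_mul
      (c' * cq)).mono' mH1.aestronglyMeasurable (Filter.Eventually.of_forall fun z => ?_)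
    obtain ⟨x, y⟩ := z
    have hq2 := hqpos y x
    have hr0p := hr_pos 0 h02 x y
    have hd0 : (0:ℝ) ≤ pρ x / pμ x := div_nonneg (hpρ0 x) (hpμpos x).le
    have e0 : ‖H1 (x, y)‖ = (|f y - f x| * |g' (r 0 x y)|)
        * (q y x * ((pρ x / pμ x) * |pν y - pμ y|)) := by
      rw [Real.norm_eq_abs]
      simp only [hH1]
      rw [abs_mul, abs_mul, abs_mul, abs_mul, abs_of_pos hq2, abs_of_nonneg hd0]
      ring
    rw [e0]
    calc (|f y - f x| * |g' (r 0 x y)|) * (q y x * ((pρ x / pμ x) * |pν y - pμ y|))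
        ≤ ((|f x| + |f y|) * c') * (cq * ((pρ x / pμ x) * |pν y - pμ y|)) := by
          apply mul_le_mul
          · exact mul_le_mul (habsf x y) (hc' _ hr0p) (abs_nonneg _)
              (add_nonneg (abs_nonneg _) (abs_nonneg _))
          · exact mul_le_mul_of_nonneg_right (hcq y x) (mul_nonneg hd0 (abs_nonneg _))
          · exact mul_nonneg hq2.le (mul_nonneg hd0 (abs_nonneg _))
          · exact mul_nonneg (add_nonneg (abs_nonneg _) (abs_nonneg _)) hc'0
      _ = (c' * cq) * ((|f x| * (pρ x / pμ x)) * |pν y - pμ y|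
            + (pρ x / pμ x) * (|f y| * |pν y - pμ y|)) := by ring
  have int_H2 : Integrable H2 (lam.prod lam) := by
    refine (((int_fd.mul_prod int_μ).add (int_d.mul_prod int_fμ)).const_mul
      (c' * cq * cρ)).mono' mH2.aestronglyMeasurable (Filter.Eventually.of_forall fun z => ?_)
    obtain ⟨x, y⟩ := z
    have hq2 := hqpos y x
    have hr0p := hr_pos 0 h02 x y
    have hd0 : (0:ℝ) ≤ pρ x / pμ x ^ 2 := div_nonneg (hpρ0 x) (by positivity)
    have hd1 : pρ x / pμ x ^ 2 ≤ cρ := by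
      rw [div_le_iff₀ (pow_pos (hpμpos x) 2)]
      exact hcρ x
    have e0 : ‖H2 (x, y)‖ = (|f y - f x| * |g' (r 0 x y)|)
        * (q y x * ((pρ x / pμ x ^ 2) * (pμ y * |pν x - pμ x|))) := by
      rw [Real.norm_eq_abs]
      simp only [hH2]
      rw [abs_mul, abs_mul, abs_mul, abs_mul, abs_mul, abs_of_pos hq2, abs_of_nonneg hd0,
        abs_of_pos (hpμpos y)]
      ring
    rw [e0]
    have hμy := hpμpos y
    calc (|f y - f x| * |g' (r 0 x y)|)
          * (q y x * ((pρ x / pμ x ^ 2) * (pμ y * |pν x - pμ x|)))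
        ≤ ((|f x| + |f y|) * c') * (cq * (cρ * (pμ y * |pν x - pμ x|))) := by
          have hny : (0:ℝ) ≤ pμ y * |pν x - pμ x| := mul_nonneg (hpμpos y).le (abs_nonneg _)
          apply mul_le_mul
          · exact mul_le_mul (habsf x y) (hc' _ hr0p) (abs_nonneg _)
              (add_nonneg (abs_nonneg _) (abs_nonneg _))
          · exact mul_le_mul (hcq y x) (mul_le_mul_of_nonneg_right hd1 hny)
              (mul_nonneg hd0 hny) hcq0.le
          · exact mul_nonneg hq2.le (mul_nonneg hd0 hny)
          · exact mul_nonneg (add_nonneg (abs_nonneg _) (abs_nonneg _)) hc'0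
      _ = (c' * cq * cρ) * ((|f x| * |pν x - pμ x|) * pμ y
            + |pν x - pμ x| * (|f y| * pμ y)) := by ring
  -- key quantitative bound on the increment
  have hsub : ∀ t ∈ Set.Ioc (0:ℝ) 2⁻¹, ∀ z : X × X, |H t z - H 0 z| ≤ t * G z := by
    intro t ht z
    obtain ⟨x, y⟩ := z
    have ht' : t ∈ Set.Icc (0:ℝ) 2⁻¹ := ⟨ht.1.le, ht.2⟩
    have hq1 := hqpos x y
    have hq2 := hqpos y x
    have hμx := hpμpos x
    have hμy := hpμpos y
    have hptx := hpt_pos t ht' x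
    have hrpt := hr_pos t ht' x y
    have hrp0 := hr_pos 0 h02 x y
    set N : ℝ := (pν y - pμ y) * pμ x - pμ y * (pν x - pμ x) with hNdef
    have er0 : r 0 x y = pμ y * q y x / (pμ x * q x y) := by
      simp only [hrdef, hp0]
    have ert : r t x y = p t y * q y x / (p t x * q x y) := rfl
    have e1 : r t x y - r 0 x y = t * (q y x * N) / (q x y * (p t x * pμ x)) := by
      rw [ert, er0, div_sub_div _ _ (mul_pos hptx hq1).ne' (mul_pos hμx hq1).ne',
        div_eq_div_iff (mul_pos (mul_pos hptx hq1) (mul_pos hμx hq1)).ne'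
          (mul_pos hq1 (mul_pos hptx hμx)).ne']
      simp only [hp, hNdef]
      ring
    have habs1 : |r t x y - r 0 x y| = t * (q y x * |N|) / (q x y * (p t x * pμ x)) := by
      rw [e1, abs_div, abs_mul, abs_mul, abs_of_pos ht.1, abs_of_pos hq2,
        abs_of_pos (mul_pos hq1 (mul_pos hptx hμx))]
    have hNle : |N| ≤ |pν y - pμ y| * pμ x + pμ y * |pν x - pμ x| := by
      calc |N| ≤ |(pν y - pμ y) * pμ x| + |pμ y * (pν x - pμ x)| := abs_sub _ _
        _ = |pν y - pμ y| * pμ x + pμ y * |pν x - pμ x| := by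
            rw [abs_mul, abs_mul, abs_of_pos hμx, abs_of_pos hμy]
    have hfrac : t * (q y x * |N|) / (q x y * (p t x * pμ x))
        ≤ t * (q y x * |N|) / (q x y * (pμ x ^ 2 / 2)) := by
      apply div_le_div_of_nonneg_left (mul_nonneg ht.1.le (mul_nonneg hq2.le (abs_nonneg _)))
        (mul_pos hq1 (div_pos (pow_pos hμx 2) two_pos))
      apply mul_le_mul_of_nonneg_left _ hq1.le
      nlinarith [hpt_half t ht' x]
    have hd0 : (0:ℝ) ≤ pρ x / pμ x ^ 2 := div_nonneg (hpρ0 x) (by positivity)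
    have hd1 : pρ x / pμ x ^ 2 ≤ cρ := by
      rw [div_le_iff₀ (pow_pos hμx 2)]
      exact hcρ x
    have hdiff : H t (x, y) - H 0 (x, y)
        = ((f y - f x) * (q x y * pρ x)) * (g (r t x y) - g (r 0 x y)) := by
      simp only [hH]; ring
    have hinner : q y x * (|N| * (pρ x / pμ x ^ 2))
        ≤ cq * ((|pν y - pμ y| * pμ x + pμ y * |pν x - pμ x|) * cρ) := by
      apply mul_le_mul (hcq y x) (mul_le_mul hNle hd1 hd0
          (add_nonneg (mul_nonneg (abs_nonneg _) hμx.le) (mul_nonneg hμy.le (abs_nonneg _))))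
        (mul_nonneg (abs_nonneg _) hd0) hcq0.le
    calc |H t (x, y) - H 0 (x, y)|
        = (|f y - f x| * (q x y * pρ x)) * |g (r t x y) - g (r 0 x y)| := by
          rw [hdiff, abs_mul, abs_mul, abs_mul, abs_of_pos hq1, abs_of_nonneg (hpρ0 x)]
      _ ≤ (|f y - f x| * (q x y * pρ x)) * (c' * |r t x y - r 0 x y|) := by
          apply mul_le_mul_of_nonneg_left (lip_of_deriv hg' hc' hrp0 hrpt)
          exact mul_nonneg (abs_nonneg _) (mul_nonneg hq1.le (hpρ0 x))
      _ ≤ ((|f x| + |f y|) * (q x y * pρ x)) * (c' * |r t x y - r 0 x y|) := by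
          apply mul_le_mul_of_nonneg_right
            (mul_le_mul_of_nonneg_right (habsf x y) (mul_nonneg hq1.le (hpρ0 x)))
          exact mul_nonneg hc'0 (abs_nonneg _)
      _ ≤ ((|f x| + |f y|) * (q x y * pρ x))
            * (c' * (t * (q y x * |N|) / (q x y * (pμ x ^ 2 / 2)))) := by
          apply mul_le_mul_of_nonneg_left _ (mul_nonneg
            (add_nonneg (abs_nonneg _) (abs_nonneg _)) (mul_nonneg hq1.le (hpρ0 x)))
          apply mul_le_mul_of_nonneg_left _ hc'0
          rw [habs1]
          exact hfrac
      _ = t * (2 * c') * ((|f x| + |f y|) * (q y x * (|N| * (pρ x / pμ x ^ 2)))) := by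
          field_simp
      _ ≤ t * (2 * c') * ((|f x| + |f y|)
            * (cq * ((|pν y - pμ y| * pμ x + pμ y * |pν x - pμ x|) * cρ))) := by
          apply mul_le_mul_of_nonneg_left (mul_le_mul_of_nonneg_left hinner
            (add_nonneg (abs_nonneg _) (abs_nonneg _)))
          exact mul_nonneg ht.1.le (by linarith)
      _ = t * G (x, y) := by
          simp only [hG]
          ring
  -- pointwise limit of difference quotients
  have hlim : ∀ z : X × X, Tendsto (fun t => (H t z - H 0 z) / (t - 0)) (𝓝[Set.Ioi 0] 0)
      (𝓝 (H1 z - H2 z)) := by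
    intro z
    obtain ⟨x, y⟩ := z
    have hq1 := hqpos x y
    have hq2 := hqpos y x
    have hμx := hpμpos x
    have hμy := hpμpos y
    have hrp0 := hr_pos 0 h02 x y
    have hderivp : ∀ w : X, HasDerivAt (fun t : ℝ => p t w) (pν w - pμ w) 0 := by
      intro w
      have hfun : (fun t : ℝ => p t w) = fun t => pμ w + t * (pν w - pμ w) := by
        funext t; simp only [hp]; ring
      rw [hfun]
      simpa using ((hasDerivAt_id (0:ℝ)).mul_const (pν w - pμ w)).const_add (pμ w)
    have hnum : HasDerivAt (fun t : ℝ => p t y * q y x) ((pν y - pμ y) * q y x) 0 :=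
      (hderivp y).mul_const (q y x)
    have hden : HasDerivAt (fun t : ℝ => p t x * q x y) ((pν x - pμ x) * q x y) 0 :=
      (hderivp x).mul_const (q x y)
    have hden0 : p 0 x * q x y ≠ 0 := (mul_pos (hpt_pos 0 h02 x) hq1).ne'
    have hr' : HasDerivAt (fun t => r t x y)
        (((pν y - pμ y) * q y x * (p 0 x * q x y) - p 0 y * q y x * ((pν x - pμ x) * q x y))
          / (p 0 x * q x y) ^ 2) 0 := by
      simp only [hrdef]
      exact hnum.div hden hden0
    have hgr : HasDerivAt (fun t : ℝ => g (r t x y))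
        (g' (r 0 x y) *
          (((pν y - pμ y) * q y x * (p 0 x * q x y) - p 0 y * q y x * ((pν x - pμ x) * q x y))
            / (p 0 x * q x y) ^ 2)) 0 := (hg' _ hrp0).comp 0 hr'
    have hHd : HasDerivAt (fun t : ℝ => H t (x, y))
        (((f y - f x) * q x y * pρ x) * (g' (r 0 x y) *
          (((pν y - pμ y) * q y x * (p 0 x * q x y) - p 0 y * q y x * ((pν x - pμ x) * q x y))
            / (p 0 x * q x y) ^ 2))) 0 := by
      have hfun2 : (fun t : ℝ => H t (x, y))
          = fun t => ((f y - f x) * q x y * pρ x) * g (r t x y) := by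
        funext t; simp only [hH]; ring
      rw [hfun2]
      exact hgr.const_mul _
    have hval : ((f y - f x) * q x y * pρ x) * (g' (r 0 x y) *
        (((pν y - pμ y) * q y x * (p 0 x * q x y) - p 0 y * q y x * ((pν x - pμ x) * q x y))
          / (p 0 x * q x y) ^ 2)) = H1 (x, y) - H2 (x, y) := by
      simp only [hH1, hH2, hp0]
      field_simp
    rw [← hval]
    have hW := (hHd.hasDerivWithinAt (s := Set.Ioi 0))
    rw [hasDerivWithinAt_iff_tendsto_slope] at hW
    rw [Set.diff_singleton_eq_self (by simp)] at hW
    refine hW.congr fun t => ?_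
    rw [slope_def_field]
  -- the derivative of the bilinear part
  have int_H12 : Integrable (fun z => H1 z - H2 z) (lam.prod lam) := int_H1.sub int_H2
  have hIoo : Set.Ioo (0:ℝ) 2⁻¹ ∈ 𝓝[Set.Ioi 0] (0:ℝ) :=
    Ioo_mem_nhdsGT_of_mem (Set.left_mem_Ico.mpr (by norm_num))
  have hslope : Tendsto
      (fun t => (∫ z, H t z ∂(lam.prod lam) - ∫ z, H 0 z ∂(lam.prod lam)) / (t - 0))
      (𝓝[Set.Ioi 0] 0) (𝓝 (∫ z, (H1 z - H2 z) ∂(lam.prod lam))) := by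
    have hDCT := MeasureTheory.tendsto_integral_filter_of_dominated_convergence
      (μ := lam.prod lam) (l := 𝓝[Set.Ioi 0] (0:ℝ)) (F := fun t z => (H t z - H 0 z) / (t - 0))
      (f := fun z => H1 z - H2 z) G ?_ ?_ int_G ?_
    · refine hDCT.congr' ?_
      filter_upwards [hIoo] with t ht
      rw [MeasureTheory.integral_div, MeasureTheory.integral_sub (int_H t ⟨ht.1.le, ht.2.le⟩)
        (int_H 0 h02)]
    · filter_upwards [hIoo] with t ht
      exact (((mH t ⟨ht.1.le, ht.2.le⟩).sub (mH 0 h02)).div_const _).aestronglyMeasurable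
    · filter_upwards [hIoo] with t ht
      refine Filter.Eventually.of_forall fun z => ?_
      rw [sub_zero, norm_div, Real.norm_eq_abs, Real.norm_eq_abs, abs_of_pos ht.1,
        div_le_iff₀ ht.1]
      calc |H t z - H 0 z| ≤ t * G z := hsub t ⟨ht.1, ht.2.le⟩ z
        _ = G z * t := by ring
    · exact Filter.Eventually.of_forall fun z => hlim z
  have hB : HasDerivWithinAt (fun t => ∫ z, H t z ∂(lam.prod lam))
      (∫ z, (H1 z - H2 z) ∂(lam.prod lam)) (Set.Ici 0) 0 := by
    rw [hasDerivWithinAt_iff_tendsto_slope, Set.Ici_sdiff_left]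
    refine Tendsto.congr (fun t => ?_) hslope
    rw [slope_def_field]
  -- Fubini: identify the limit with the stated derivative
  have hfub1 : ∫ z, H1 z ∂(lam.prod lam) = ∫ y, (pν y - pμ y) *
      (∫ z, (f y - f z) * (pρ z / pμ z) * g' (hastingsRatio q pμ z y) * q y z ∂lam) ∂lam := by
    rw [MeasureTheory.integral_prod_symm _ int_H1]
    refine integral_congr_ae (Filter.Eventually.of_forall fun y => ?_)
    beta_reduce
    have e1 : ∫ x, H1 (x, y) ∂lam = ∫ x, ((f y - f x) * (pρ x / pμ x)
        * g' (hastingsRatio q pμ x y) * q y x) * (pν y - pμ y) ∂lam := by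
      refine integral_congr_ae (Filter.Eventually.of_forall fun x => ?_)
      simp only [hH1, hr0_eq]
      ring
    rw [e1, integral_mul_const]
    exact mul_comm _ _
  have hfub2 : ∫ z, H2 z ∂(lam.prod lam) = ∫ x, (pν x - pμ x) * (pρ x / pμ x ^ 2 *
      ∫ y, (f y - f x) * q y x * g' (hastingsRatio q pμ x y) * pμ y ∂lam) ∂lam := by
    rw [MeasureTheory.integral_prod _ int_H2]
    refine integral_congr_ae (Filter.Eventually.of_forall fun x => ?_)
    beta_reduce
    have e1 : ∫ y, H2 (x, y) ∂lam = ∫ y, ((pρ x / pμ x ^ 2) * (pν x - pμ x))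
        * ((f y - f x) * q y x * g' (hastingsRatio q pμ x y) * pμ y) ∂lam := by
      refine integral_congr_ae (Filter.Eventually.of_forall fun y => ?_)
      simp only [hH2, hr0_eq]
      ring
    rw [e1, integral_const_mul]
    ring
  have int_inner1 : Integrable (fun y => (pν y - pμ y) *
      (∫ z, (f y - f z) * (pρ z / pμ z) * g' (hastingsRatio q pμ z y) * q y z ∂lam)) lam := by
    refine (int_H1.integral_prod_right).congr (Filter.Eventually.of_forall fun y => ?_)
    beta_reduce
    have e1 : ∫ x, H1 (x, y) ∂lam = ∫ x, ((f y - f x) * (pρ x / pμ x)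
        * g' (hastingsRatio q pμ x y) * q y x) * (pν y - pμ y) ∂lam := by
      refine integral_congr_ae (Filter.Eventually.of_forall fun x => ?_)
      simp only [hH1, hr0_eq]
      ring
    rw [e1, integral_mul_const]
    exact mul_comm _ _
  have int_inner2 : Integrable (fun x => (pν x - pμ x) * (pρ x / pμ x ^ 2 *
      ∫ y, (f y - f x) * q y x * g' (hastingsRatio q pμ x y) * pμ y ∂lam)) lam := by
    refine (int_H2.integral_prod_left).congr (Filter.Eventually.of_forall fun x => ?_)
    beta_reduce
    have e1 : ∫ y, H2 (x, y) ∂lam = ∫ y, ((pρ x / pμ x ^ 2) * (pν x - pμ x))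
        * ((f y - f x) * q y x * g' (hastingsRatio q pμ x y) * pμ y) ∂lam := by
      refine integral_congr_ae (Filter.Eventually.of_forall fun y => ?_)
      simp only [hH2, hr0_eq]
      ring
    rw [e1, integral_const_mul]
    ring
  have hLeq : (∫ y, (pν y - pμ y) *
      ((∫ z, (f y - f z) * (pρ z / pμ z) * g' (hastingsRatio q pμ z y) * q y z ∂lam)
        - pρ y / pμ y ^ 2 *
            ∫ z, (f z - f y) * q z y * g' (hastingsRatio q pμ y z) * pμ z ∂lam) ∂lam)
      = ∫ z, (H1 z - H2 z) ∂(lam.prod lam) := by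
    calc (∫ y, (pν y - pμ y) *
        ((∫ z, (f y - f z) * (pρ z / pμ z) * g' (hastingsRatio q pμ z y) * q y z ∂lam)
          - pρ y / pμ y ^ 2 *
              ∫ z, (f z - f y) * q z y * g' (hastingsRatio q pμ y z) * pμ z ∂lam) ∂lam)
        = ∫ y, ((pν y - pμ y) *
            (∫ z, (f y - f z) * (pρ z / pμ z) * g' (hastingsRatio q pμ z y) * q y z ∂lam)
          - (pν y - pμ y) * (pρ y / pμ y ^ 2 *
              ∫ z, (f z - f y) * q z y * g' (hastingsRatio q pμ y z) * pμ z ∂lam)) ∂lam := by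
          refine integral_congr_ae (Filter.Eventually.of_forall fun y => ?_)
          beta_reduce
          ring
      _ = (∫ y, (pν y - pμ y) *
            (∫ z, (f y - f z) * (pρ z / pμ z) * g' (hastingsRatio q pμ z y) * q y z ∂lam) ∂lam)
          - ∫ y, (pν y - pμ y) * (pρ y / pμ y ^ 2 *
              ∫ z, (f z - f y) * q z y * g' (hastingsRatio q pμ y z) * pμ z ∂lam) ∂lam :=
          MeasureTheory.integral_sub int_inner1 int_inner2
      _ = (∫ z, H1 z ∂(lam.prod lam)) - ∫ z, H2 z ∂(lam.prod lam) := by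
          rw [hfub1, hfub2]
      _ = ∫ z, (H1 z - H2 z) ∂(lam.prod lam) :=
          (MeasureTheory.integral_sub int_H1 int_H2).symm
  -- rewriting the objective function near 0
  have int_pρf : Integrable (fun x => pρ x * f x) lam := by
    refine int_fρ.mono' (hpρm.mul hfm).aestronglyMeasurable
      (Filter.Eventually.of_forall fun x => ?_)
    rw [Real.norm_eq_abs, abs_mul, abs_of_nonneg (hpρ0 x)]
    exact le_of_eq (mul_comm _ _)
  have hker : ∀ t ∈ Set.Icc (0:ℝ) 2⁻¹, ∀ x : X,
      pρ x * hastingsKernelFun lam g q (p t) x f = pρ x * f x + ∫ y, H t (x, y) ∂lam := by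
    intro t ht x
    have hq1y : ∀ y, 0 < q x y := fun y => hqpos x y
    have hmy_r : Measurable fun y => r t x y := by
      simp only [hrdef]
      exact (((hptm t).mul (hqm.comp measurable_prodMk_right)).div
        (measurable_const.mul (hqm.comp (measurable_prodMk_left (x := x)))))
    have hgy : Measurable fun y => g (r t x y) :=
      measurable_comp_pos hgc hmy_r fun y => hr_pos t ht x y
    have int_gq : Integrable (fun y => g (r t x y) * q x y) lam := by
      refine (intq x).mono' (hgy.mul (hqm.comp
        (measurable_prodMk_left (x := x)))).aestronglyMeasurable
        (Filter.Eventually.of_forall fun y => ?_)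
      rw [Real.norm_eq_abs,
        abs_of_nonneg (mul_nonneg (hg0 _ (hr_pos t ht x y)).le (hq1y y).le)]
      exact mul_le_of_le_one_left (hq1y y).le (hgle1 _ (hr_pos t ht x y))
    have int_fgq : Integrable (fun y => f y * g (r t x y) * q x y) lam := by
      refine (int_fμν.const_mul (2 * cq / pμ x)).mono'
        ((hfm.mul hgy).mul (hqm.comp (measurable_prodMk_left (x := x)))).aestronglyMeasurable
        (Filter.Eventually.of_forall fun y => ?_)
      have hgq := hgqb t ht x y
      have hgq0 : 0 ≤ g (r t x y) * q x y :=
        mul_nonneg (hg0 _ (hr_pos t ht x y)).le (hq1y y).le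
      calc ‖f y * g (r t x y) * q x y‖ = |f y| * (g (r t x y) * q x y) := by
            rw [Real.norm_eq_abs, abs_mul, abs_mul, abs_of_pos (hg0 _ (hr_pos t ht x y)),
              abs_of_pos (hq1y y)]
            ring
        _ ≤ |f y| * (2 * cq * (pμ y + pν y) / pμ x) :=
            mul_le_mul_of_nonneg_left hgq (abs_nonneg _)
        _ = 2 * cq / pμ x * (|f y| * (pμ y + pν y)) := by ring
    have hker0 : hastingsKernelFun lam g q (p t) x f
        = (∫ y, f y * g (r t x y) * q x y ∂lam)
          + f x * (1 - ∫ y, g (r t x y) * q x y ∂lam) := by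
      simp only [hastingsKernelFun, hastingsRatio, hrdef]
    have e2 : ∫ y, H t (x, y) ∂lam = pρ x * ((∫ y, f y * g (r t x y) * q x y ∂lam)
        - f x * ∫ y, g (r t x y) * q x y ∂lam) := by
      have e3 : (fun y => H t (x, y)) = fun y => pρ x * (f y * g (r t x y) * q x y
          - f x * (g (r t x y) * q x y)) := by
        funext y; simp only [hH]; ring
      rw [e3, integral_const_mul,
        MeasureTheory.integral_sub int_fgq (int_gq.const_mul (f x)), integral_const_mul]
    rw [hker0, e2]
    ring
  have hΦ : ∀ t ∈ Set.Icc (0:ℝ) 2⁻¹,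
      (∫ x, hastingsKernelFun lam g q (fun y => (1 - t) * pμ y + t * pν y) x f
        ∂(lam.withDensity fun x => ENNReal.ofReal (pρ x)))
      = (∫ x, pρ x * f x ∂lam) + ∫ z, H t z ∂(lam.prod lam) := by
    intro t ht
    have hwd : (∫ x, hastingsKernelFun lam g q (fun y => (1 - t) * pμ y + t * pν y) x f
        ∂(lam.withDensity fun x => ENNReal.ofReal (pρ x)))
        = ∫ x, pρ x * hastingsKernelFun lam g q (p t) x f ∂lam := by
      have h1 := integral_withDensity_eq_integral_smul (μ := lam)
        (f := fun x => Real.toNNReal (pρ x)) hpρm.real_toNNReal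
        (fun x => hastingsKernelFun lam g q (p t) x f)
      have h2 : (lam.withDensity fun x => ENNReal.ofReal (pρ x))
          = lam.withDensity fun x => ((Real.toNNReal (pρ x) : ℝ≥0) : ℝ≥0∞) := rfl
      rw [h2]
      rw [show (fun y => (1 - t) * pμ y + t * pν y) = p t from rfl]
      rw [h1]
      refine integral_congr_ae (Filter.Eventually.of_forall fun x => ?_)
      beta_reduce
      rw [NNReal.smul_def, Real.coe_toNNReal _ (hpρ0 x), smul_eq_mul]
    rw [hwd, integral_congr_ae (Filter.Eventually.of_forall (hker t ht)),
      MeasureTheory.integral_add int_pρf (int_H t ht).integral_prod_left,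
      MeasureTheory.integral_prod _ (int_H t ht)]
  -- final assembly
  rw [hLeq]
  have hmain : HasDerivWithinAt
      (fun t => (∫ x, pρ x * f x ∂lam) + ∫ z, H t z ∂(lam.prod lam))
      (∫ z, (H1 z - H2 z) ∂(lam.prod lam)) (Set.Ici 0) 0 := hB.const_add _
  refine hmain.congr_of_eventuallyEq ?_ (hΦ 0 h02)
  filter_upwards [Ico_mem_nhdsGE_of_mem
    (Set.left_mem_Ico.mpr (by norm_num : (0:ℝ) < 2⁻¹))] with t ht
  exact hΦ t ⟨ht.1, ht.2.le⟩
end
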